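/- If F, G : V → V are Fréchet differentiable mixed-logarithmic homogeneous operators with logarithmic indices (p_F, q_F) and (p_G, q_G), then the bracket [F,G](φ) := DF(φ)(G(φ)) - DG(φ)(F(φ)) is mixed-logarithmic homogeneous with logarithmic indices given by the commutator [(p_F,q_F),(p_G,q_G)] in the mixed-power index algebra, i.e. (p_F,q_F)(p_G,q_G) - (p_G,q_G)(p_F,q_F) where (a,b)(c,d) = (a·Re c + i·b·Im c, b·Re d + i·a·Im d). -/

import Mathlib

/-- The product on index pairs: `(a,b)(c,d) = (a·Re c + i·b·Im c, b·Re d + i·a·Im d)`. -/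
noncomputable def idxMul (p q : ℂ × ℂ) : ℂ × ℂ :=
  (p.1 * (q.1.re : ℂ) + Complex.I * p.2 * (q.1.im : ℂ),
   p.2 * (q.2.re : ℂ) + Complex.I * p.1 * (q.2.im : ℂ))

/-- The commutator bracket on index pairs. -/
noncomputable def idxBracket (p q : ℂ × ℂ) : ℂ × ℂ :=
  idxMul p q - idxMul q p

/-- Mixed-logarithmic homogeneity of `H : V → V` with indices `(p,q)`:
`H(kφ) = k·H(φ) + k·(p·ln|k| + i·q·arg k)·φ` for all `φ` and all complex `k` near `1`. -/
def MLHom {V : Type*} [NormedAddCommGroup V] [NormedSpace ℂ V]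
    (H : V → V) (p q : ℂ) : Prop :=
  ∀ φ : V, ∀ᶠ k in nhds (1 : ℂ), H (k • φ) =
    k • H φ + (k * (p * Real.log ‖k‖ + Complex.I * q * k.arg)) • φ

section BracketMLHomAux
open Complex Filter Metric Set
variable {V : Type*} [NormedAddCommGroup V] [NormedSpace ℂ V]

noncomputable def mlc (p q k : ℂ) : ℂ :=
  p * (Real.log ‖k‖ : ℝ) + Complex.I * q * (k.arg : ℝ)


lemma re_pos_of_ball {k : ℂ} (hk : k ∈ Metric.ball (1:ℂ) 1) : 0 < k.re := by
  have h : ‖k - 1‖ < 1 := by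
    simpa [Complex.dist_eq] using hk
  have h2 : |(k - 1).re| ≤ ‖k - 1‖ := Complex.abs_re_le_norm _
  have : |k.re - 1| < 1 := by simpa using h2.trans_lt h
  linarith [abs_lt.1 this |>.1]

lemma ne_zero_of_re_pos {k : ℂ} (h : 0 < k.re) : k ≠ 0 := by
  intro h0; rw [h0] at h; simp at h

lemma mlc_mul (p q : ℂ) {x y : ℂ} (hx : 0 < x.re) (hy : 0 < y.re) :
    mlc p q (x * y) = mlc p q x + mlc p q y := by
  have hx0 := _root_.ne_zero_of_re_pos hx
  have hy0 := _root_.ne_zero_of_re_pos hy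
  have hax : |x.arg| < Real.pi / 2 := Complex.abs_arg_lt_pi_div_two_iff.2 (Or.inl hx)
  have hay : |y.arg| < Real.pi / 2 := Complex.abs_arg_lt_pi_div_two_iff.2 (Or.inl hy)
  have harg : (x * y).arg = x.arg + y.arg := by
    apply Complex.arg_mul hx0 hy0
    constructor
    · nlinarith [abs_lt.1 hax, abs_lt.1 hay, Real.pi_pos]
    · nlinarith [abs_lt.1 hax, abs_lt.1 hay, Real.pi_pos]
  have habs : Real.log ‖x * y‖ = Real.log ‖x‖ + Real.log ‖y‖ := by
    rw [norm_mul, Real.log_mul (norm_ne_zero_iff.2 hx0) (norm_ne_zero_iff.2 hy0)]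
  simp only [mlc, harg, habs, Complex.ofReal_add]
  ring

variable {V : Type*} [NormedAddCommGroup V] [NormedSpace ℂ V]

noncomputable def Lsmul (v : V) : ℂ →L[ℝ] V :=
  (ContinuousLinearMap.toSpanSingleton ℂ v).restrictScalars ℝ

@[simp] lemma Lsmul_apply (v : V) (k : ℂ) : Lsmul v k = k • v := rfl

lemma hasFDerivAt_smul_const (v : V) (x : ℂ) :
    HasFDerivAt (fun k : ℂ => k • v) (Lsmul v) x :=
  (Lsmul v).hasFDerivAt

-- derivative of k ↦ k * mlc p q k at 1
lemma hasFDerivAt_mul_mlc (p q : ℂ) :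
    ∃ D : ℂ →L[ℝ] ℂ, HasFDerivAt (fun k : ℂ => k * mlc p q k) D 1 ∧
      ∀ w : ℂ, D w = p * (w.re : ℝ) + Complex.I * q * (w.im : ℝ) := by
  have hlog := ((Complex.hasDerivAt_log Complex.one_mem_slitPlane).hasFDerivAt).restrictScalars ℝ
  have hre := (Complex.reCLM.hasFDerivAt (x := Complex.log 1)).comp (1:ℂ) hlog
  have him := (Complex.imCLM.hasFDerivAt (x := Complex.log 1)).comp (1:ℂ) hlog
  have hre' := (Complex.ofRealCLM.hasFDerivAt).comp (1:ℂ) hre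
  have him' := (Complex.ofRealCLM.hasFDerivAt).comp (1:ℂ) him
  have h1 := (hre'.const_mul p).add ((him'.const_mul (Complex.I * q)))
  have heq : (fun k : ℂ => p * ((Complex.reCLM ∘ Complex.log) k : ℝ) + Complex.I * q * ((Complex.imCLM ∘ Complex.log) k : ℝ)) = fun k => mlc p q k := by
    funext k
    simp [mlc, Complex.log_re, Complex.log_im]
  have h2 := h1.congr_of_eventuallyEq (Filter.Eventually.of_forall
    (fun k => by simp [mlc, Complex.log_re, Complex.log_im, Function.comp] : ∀ k : ℂ, mlc p q k = _))
  have h3 := (hasFDerivAt_id (1:ℂ)).mul h2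
  refine ⟨_, h3, fun w => ?_⟩
  simp [mlc, ContinuousLinearMap.smulRight_apply, Complex.ext_iff]

lemma mlhom_mlc {H : V → V} {p q : ℂ} (hH : MLHom H p q) (φ : V) :
    ∀ᶠ k in nhds (1:ℂ), H (k • φ) = k • H φ + (k * mlc p q k) • φ := hH φ

lemma euler {H : V → V} {p q : ℂ} {DH : V → V →L[ℝ] V}
    (hDH : ∀ φ, HasFDerivAt H (DH φ) φ) (hH : MLHom H p q) (φ : V) (w : ℂ) :
    DH φ (w • φ) = w • H φ + (p * (w.re : ℝ) + Complex.I * q * (w.im : ℝ)) • φ := by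
  obtain ⟨D, hD, hDw⟩ := hasFDerivAt_mul_mlc p q
  -- f : k ↦ H (k • φ)
  have hγ : HasFDerivAt (fun k : ℂ => k • φ) (Lsmul φ) 1 := hasFDerivAt_smul_const φ 1
  have hφ1 : (1:ℂ) • φ = φ := one_smul _ _
  have hf : HasFDerivAt (fun k : ℂ => H (k • φ)) ((DH φ).comp (Lsmul φ)) 1 := by
    have h0 : HasFDerivAt H (DH φ) ((1:ℂ) • φ) := by rw [one_smul]; exact hDH φ
    have := h0.comp (1:ℂ) hγ
    exact this.congr_of_eventuallyEq (Filter.Eventually.of_forall fun k => rfl)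
  -- g : k ↦ k • H φ + (k * mlc p q k) • φ
  have hg : HasFDerivAt (fun k : ℂ => k • H φ + (k * mlc p q k) • φ)
      (Lsmul (H φ) + (Lsmul φ).comp D) 1 := by
    have h2 : HasFDerivAt (fun k : ℂ => (k * mlc p q k) • φ) ((Lsmul φ).comp D) 1 := by
      have := ((Lsmul φ).hasFDerivAt (x := (1:ℂ) * mlc p q 1)).comp (1:ℂ) hD
      exact this.congr_of_eventuallyEq (Filter.Eventually.of_forall fun k => rfl)
    exact (hasFDerivAt_smul_const (H φ) 1).add h2
  have hfg : HasFDerivAt (fun k : ℂ => H (k • φ)) (Lsmul (H φ) + (Lsmul φ).comp D) 1 :=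
    hg.congr_of_eventuallyEq (mlhom_mlc hH φ)
  have hD2 := hf.unique hfg
  have := DFunLike.congr_fun hD2 w
  simpa [hDw w] using this

lemma mlc_continuousOn (p q : ℂ) : ContinuousOn (mlc p q) {k : ℂ | 0 < k.re} := by
  intro k hk
  have hk0 : k ≠ 0 := _root_.ne_zero_of_re_pos hk
  have h1 : ContinuousAt (fun k : ℂ => (Real.log ‖k‖ : ℂ)) k :=
    Complex.continuous_ofReal.continuousAt.comp
      ((Real.continuousAt_log (norm_ne_zero_iff.2 hk0)).comp continuous_norm.continuousAt)
  have h2 : ContinuousAt (fun k : ℂ => (k.arg : ℂ)) k :=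
    Complex.continuous_ofReal.continuousAt.comp (Complex.continuousAt_arg (Or.inl hk))
  exact ((continuousAt_const.mul h1).add ((continuousAt_const.mul h2))).continuousWithinAt

lemma uniform {H : V → V} {p q : ℂ} (contH : Continuous H) (hH : MLHom H p q) (ψ : V) :
    ∀ k ∈ Metric.ball (1:ℂ) 1, H (k • ψ) = k • H ψ + (k * mlc p q k) • ψ := by
  set S : Set ℂ := {k | H (k • ψ) = k • H ψ + (k * mlc p q k) • ψ} with hS
  have prop : ∀ k : ℂ, 0 < k.re → k ∈ S → S ∈ nhds k := by
    intro k hkre hkS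
    have hk0 : k ≠ 0 := _root_.ne_zero_of_re_pos hkre
    have h1 : ∀ᶠ k' in nhds (1:ℂ), 0 < k'.re :=
      (isOpen_lt continuous_const Complex.continuous_re).eventually_mem (by norm_num)
    have h3 : ∀ᶠ k' in nhds (1:ℂ), k' * k ∈ S := by
      filter_upwards [h1, mlhom_mlc hH (k • ψ)] with k' hre' heq'
      show H ((k' * k) • ψ) = (k' * k) • H ψ + ((k' * k) * mlc p q (k' * k)) • ψ
      rw [mul_smul, heq', hkS, mlc_mul p q hre' hkre]
      module
    have hmap : Filter.map (fun k' => k' * k) (nhds (1:ℂ)) = nhds k := by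
      simpa using (Homeomorph.mulRight₀ k hk0).map_nhds_eq 1
    rw [← hmap]
    exact h3
  set u := interior S with hu
  set v := {k : ℂ | 0 < k.re} ∩ {k | ¬ (H (k • ψ) = k • H ψ + (k * mlc p q k) • ψ)} with hv
  have hvopen : IsOpen v := by
    have hcont : ContinuousOn (fun k : ℂ => H (k • ψ) - (k • H ψ + (k * mlc p q k) • ψ))
        {k : ℂ | 0 < k.re} := by
      apply ContinuousOn.sub
      · exact (contH.comp (continuous_id.smul continuous_const)).continuousOn
      · exact ((continuous_id.smul continuous_const).continuousOn).add
          (((continuousOn_id.mul (mlc_continuousOn p q))).smul continuousOn_const)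
    have hopen := hcont.isOpen_inter_preimage (isOpen_lt continuous_const Complex.continuous_re)
      (isOpen_compl_singleton (x := (0:V)))
    convert hopen using 1
    ext k
    simp [hv, sub_eq_zero]
  have huv : Disjoint u v := by
    rw [Set.disjoint_left]
    intro k hku hkv
    exact hkv.2 ((interior_subset : interior S ⊆ S) hku)
  have hcover : Metric.ball (1:ℂ) 1 ⊆ u ∪ v := by
    intro k hk
    have hkre := re_pos_of_ball hk
    by_cases hkS : k ∈ S
    · exact Or.inl (mem_interior_iff_mem_nhds.2 (prop k hkre hkS))
    · exact Or.inr ⟨hkre, hkS⟩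
  have h1u : ((Metric.ball (1:ℂ) 1) ∩ u).Nonempty := by
    refine ⟨1, Metric.mem_ball_self one_pos, mem_interior_iff_mem_nhds.2 ?_⟩
    exact mlhom_mlc hH ψ
  have hsub := (convex_ball (1:ℂ) 1).isPreconnected.subset_left_of_subset_union
    isOpen_interior hvopen huv hcover h1u
  intro k hk
  exact (interior_subset : interior S ⊆ S) (hsub hk)

lemma chain {H : V → V} {p q : ℂ} {DH : V → V →L[ℝ] V}
    (hDH : ∀ φ, HasFDerivAt H (DH φ) φ) (contH : Continuous H) (hH : MLHom H p q)
    {k : ℂ} (hk : k ∈ Metric.ball (1:ℂ) 1) (φ v : V) :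
    DH (k • φ) (k • v) = k • DH φ v + (k * mlc p q k) • v := by
  set M : V →L[ℝ] V := (k • ContinuousLinearMap.id ℂ V).restrictScalars ℝ with hM
  set N : V →L[ℝ] V := ((k * mlc p q k) • ContinuousLinearMap.id ℂ V).restrictScalars ℝ with hN
  have hMx : ∀ x : V, M x = k • x := fun x => rfl
  have hNx : ∀ x : V, N x = (k * mlc p q k) • x := fun x => rfl
  have hf : HasFDerivAt (fun ψ : V => H (k • ψ)) ((DH (k • φ)).comp M) φ := by
    have h0 : HasFDerivAt H (DH (k • φ)) (M φ) := by rw [hMx]; exact hDH (k • φ)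
    exact (h0.comp φ M.hasFDerivAt).congr_of_eventuallyEq (Filter.Eventually.of_forall fun ψ => rfl)
  have hg : HasFDerivAt (fun ψ : V => k • H ψ + (k * mlc p q k) • ψ) (M.comp (DH φ) + N) φ := by
    have h1 : HasFDerivAt (fun ψ : V => k • H ψ) (M.comp (DH φ)) φ :=
      ((M.hasFDerivAt).comp φ (hDH φ)).congr_of_eventuallyEq (Filter.Eventually.of_forall fun ψ => rfl)
    exact h1.add N.hasFDerivAt
  have hfg : (fun ψ : V => H (k • ψ)) = fun ψ : V => k • H ψ + (k * mlc p q k) • ψ :=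
    funext fun ψ => uniform contH hH ψ k hk
  rw [hfg] at hf
  have hD := hf.unique hg
  have := DFunLike.congr_fun hD v
  simpa [hMx, hNx] using this

end BracketMLHomAux

/-- If `F, G` are Fréchet differentiable (over `ℝ`) mixed-logarithmic homogeneous operators
with indices `(p_F,q_F)` and `(p_G,q_G)`, then the bracket
`[F,G](φ) = DF(φ)(G(φ)) - DG(φ)(F(φ))` is mixed-logarithmic homogeneous with indices the
commutator `[(p_F,q_F),(p_G,q_G)]` in the mixed-power index algebra. -/
theorem bracket_MLHom
    {V : Type*} [NormedAddCommGroup V] [NormedSpace ℂ V]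
    (F G : V → V) (pF qF pG qG : ℂ)
    (DF DG : V → V →L[ℝ] V)
    (hDF : ∀ φ, HasFDerivAt F (DF φ) φ)
    (hDG : ∀ φ, HasFDerivAt G (DG φ) φ)
    (hF : MLHom F pF qF) (hG : MLHom G pG qG) :
    MLHom (fun φ => DF φ (G φ) - DG φ (F φ))
      (idxBracket (pF, qF) (pG, qG)).1 (idxBracket (pF, qF) (pG, qG)).2 := by
  have contF : Continuous F := continuous_iff_continuousAt.2 fun ψ => (hDF ψ).continuousAt
  have contG : Continuous G := continuous_iff_continuousAt.2 fun ψ => (hDG ψ).continuousAt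
  intro φ
  filter_upwards [Metric.isOpen_ball.eventually_mem (Metric.mem_ball_self one_pos)] with k hk
  show DF (k • φ) (G (k • φ)) - DG (k • φ) (F (k • φ)) =
      k • (DF φ (G φ) - DG φ (F φ)) +
      (k * ((idxBracket (pF, qF) (pG, qG)).1 * Real.log ‖k‖ +
        Complex.I * (idxBracket (pF, qF) (pG, qG)).2 * k.arg)) • φ
  have hGk := uniform contG hG φ k hk
  have hFk := uniform contF hF φ k hk
  rw [hGk, hFk, map_add, map_add]
  rw [chain hDF contF hF hk φ (G φ)]
  rw [show ((k * mlc pG qG k) • φ : V) = k • (mlc pG qG k • φ) from (smul_smul k _ φ).symm]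
  rw [chain hDF contF hF hk φ (mlc pG qG k • φ), euler hDF hF φ (mlc pG qG k)]
  rw [chain hDG contG hG hk φ (F φ)]
  rw [show ((k * mlc pF qF k) • φ : V) = k • (mlc pF qF k • φ) from (smul_smul k _ φ).symm]
  rw [chain hDG contG hG hk φ (mlc pF qF k • φ), euler hDG hG φ (mlc pF qF k)]
  match_scalars <;>
  try ring1
  simp only [mlc, idxBracket, idxMul, Complex.ext_iff, Complex.add_re, Complex.add_im,
      Complex.mul_re, Complex.mul_im, Complex.sub_re, Complex.sub_im, Complex.I_re,
      Complex.I_im, Complex.ofReal_re, Complex.ofReal_im, Complex.neg_re, Complex.neg_im, Prod.fst_sub, Prod.snd_sub]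
  constructor <;> ring
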